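/- The function f(y) = π y coth(y) (extended continuously by f(0) = π) satisfies f'(y) > 0 for all y > 0 and f''(y) > 0 for all y ≥ 0. -/

import Mathlib

/-- The lump Kähler potential profile `f(y) = π y coth y`, extended by `f(0) = π`. -/
noncomputable def lumpf (y : ℝ) : ℝ :=
  if y = 0 then Real.pi else Real.pi * y * Real.cosh y / Real.sinh y

open Real

lemma mono_aux {u u' : ℝ → ℝ} (hu : ∀ x, HasDerivAt u (u' x) x)
    (h' : ∀ x, 0 < x → 0 ≤ u' x) {y : ℝ} (hy : 0 ≤ y) : u 0 ≤ u y := by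
  have hmono : MonotoneOn u (Set.Ici 0) := by
    apply monotoneOn_of_deriv_nonneg (convex_Ici 0)
    · exact (Differentiable.continuous fun x => (hu x).differentiableAt).continuousOn
    · exact fun x _ => ((hu x).differentiableAt).differentiableWithinAt
    · intro x hx
      rw [interior_Ici, Set.mem_Ioi] at hx
      rw [(hu x).deriv]; exact h' x hx
  exact hmono Set.self_mem_Ici hy hy

lemma strict_aux {u u' : ℝ → ℝ} (hu : ∀ x, HasDerivAt u (u' x) x)
    (h' : ∀ x, 0 < x → 0 < u' x) {y : ℝ} (hy : 0 < y) : u 0 < u y := by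
  have hmono : StrictMonoOn u (Set.Ici 0) := by
    apply strictMonoOn_of_deriv_pos (convex_Ici 0)
    · exact (Differentiable.continuous fun x => (hu x).differentiableAt).continuousOn
    · intro x hx
      rw [interior_Ici, Set.mem_Ioi] at hx
      rw [(hu x).deriv]; exact h' x hx
  exact hmono Set.self_mem_Ici hy.le hy

-- I2
lemma sinh_le_mul_cosh {y : ℝ} (hy : 0 ≤ y) : sinh y ≤ y * cosh y := by
  have h := mono_aux (u := fun x => x * cosh x - sinh x) (u' := fun x => x * sinh x)
    (fun x => by
      have := ((hasDerivAt_id x).mul (Real.hasDerivAt_cosh x)).sub (Real.hasDerivAt_sinh x)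
      refine this.congr_deriv ?_; simp only [id_eq]; push_cast; ring)
    (fun x hx => by positivity) hy
  simpa using h

lemma sinh_lt_mul_cosh {y : ℝ} (hy : 0 < y) : sinh y < y * cosh y := by
  have h := strict_aux (u := fun x => x * cosh x - sinh x) (u' := fun x => x * sinh x)
    (fun x => by
      have := ((hasDerivAt_id x).mul (Real.hasDerivAt_cosh x)).sub (Real.hasDerivAt_sinh x)
      refine this.congr_deriv ?_; simp only [id_eq]; push_cast; ring)
    (fun x hx => by have := Real.sinh_pos_iff.mpr hx; positivity) hy
  simpa using h

-- I3
lemma one_add_sq_le_cosh {y : ℝ} (hy : 0 ≤ y) : 1 + y^2/2 ≤ cosh y := by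
  have h := mono_aux (u := fun x => cosh x - 1 - x^2/2) (u' := fun x => sinh x - x)
    (fun x => by
      have := ((Real.hasDerivAt_cosh x).sub_const 1).sub
        (((hasDerivAt_pow 2 x)).div_const 2)
      refine this.congr_deriv ?_; push_cast; ring)
    (fun x hx => by simpa using sub_nonneg.mpr (Real.self_le_sinh_iff.mpr hx.le)) hy
  simp at h; linarith

-- I5
lemma cubic_le_sinh {y : ℝ} (hy : 0 ≤ y) : y + y^3/6 ≤ sinh y := by
  have h := mono_aux (u := fun x => sinh x - x - x^3/6) (u' := fun x => cosh x - 1 - x^2/2)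
    (fun x => by
      have := (((Real.hasDerivAt_sinh x).sub (hasDerivAt_id x))).sub
        ((hasDerivAt_pow 3 x).div_const 6)
      refine this.congr_deriv ?_; push_cast; ring)
    (fun x hx => by have := one_add_sq_le_cosh hx.le; linarith) hy
  simp at h; linarith

-- I4
lemma cosh_le_one_add {y : ℝ} (hy : 0 ≤ y) : cosh y ≤ 1 + y^2/2 * cosh y := by
  have h := mono_aux (u := fun x => x^2/2 * cosh x + 1 - cosh x)
    (u' := fun x => (x * cosh x - sinh x) + x^2/2 * sinh x)
    (fun x => by
      have := ((((hasDerivAt_pow 2 x).div_const 2).mul (Real.hasDerivAt_cosh x)).add_const 1).sub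
        (Real.hasDerivAt_cosh x)
      refine this.congr_deriv ?_; push_cast; ring)
    (fun x hx => by
      have h1 := sinh_le_mul_cosh hx.le
      have h2 := (Real.sinh_pos_iff.mpr hx).le
      nlinarith) hy
  simp at h; linarith

-- I6
lemma sinh_le_cubic {y : ℝ} (hy : 0 ≤ y) : sinh y ≤ y + y^3/6 * cosh y := by
  have h := mono_aux (u := fun x => x + x^3/6 * cosh x - sinh x)
    (u' := fun x => 1 + x^2/2 * cosh x + x^3/6 * sinh x - cosh x)
    (fun x => by
      have := (((hasDerivAt_id x).add (((hasDerivAt_pow 3 x).div_const 6).mul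
        (Real.hasDerivAt_cosh x)))).sub (Real.hasDerivAt_sinh x)
      refine this.congr_deriv ?_; push_cast; ring)
    (fun x hx => by
      have h1 := cosh_le_one_add hx.le
      have h2 := (Real.sinh_pos_iff.mpr hx).le
      nlinarith [mul_nonneg (pow_nonneg hx.le 3) h2]) hy
  simp at h; linarith

-- I7
lemma mul_cosh_sub_sinh_le {y : ℝ} (hy : 0 ≤ y) : y * cosh y - sinh y ≤ y^2 * sinh y := by
  have h := mono_aux (u := fun x => x^2 * sinh x + sinh x - x * cosh x)
    (u' := fun x => x * sinh x + x^2 * cosh x)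
    (fun x => by
      have := (((hasDerivAt_pow 2 x).mul (Real.hasDerivAt_sinh x)).add
        (Real.hasDerivAt_sinh x)).sub ((hasDerivAt_id x).mul (Real.hasDerivAt_cosh x))
      refine this.congr_deriv ?_; simp only [id_eq]; push_cast; ring)
    (fun x hx => by have := (Real.sinh_pos_iff.mpr hx).le; positivity) hy
  simp at h; linarith

noncomputable def gfun (y : ℝ) : ℝ := Real.pi * (cosh y * sinh y - y) / (sinh y)^2

lemma sinh_ne {y : ℝ} (hy : y ≠ 0) : sinh y ≠ 0 := by
  simpa using hy

lemma lumpf_neg (y : ℝ) : lumpf (-y) = lumpf y := by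
  by_cases h : y = 0
  · simp [h]
  · have hs := sinh_ne h
    simp only [lumpf, if_neg h, if_neg (neg_ne_zero.mpr h), Real.sinh_neg, Real.cosh_neg]
    field_simp

lemma gfun_neg (y : ℝ) : gfun (-y) = - gfun y := by
  by_cases h : y = 0
  · simp [gfun, h]
  · have hs := sinh_ne h
    simp only [gfun, Real.sinh_neg, Real.cosh_neg]
    field_simp
    ring

lemma hasDerivAt_lumpf {y : ℝ} (hy : y ≠ 0) : HasDerivAt lumpf (gfun y) y := by
  have hs := sinh_ne hy
  have h1 : HasDerivAt (fun y => Real.pi * y * cosh y / sinh y)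
      (((Real.pi * cosh y + Real.pi * y * sinh y) * sinh y
        - Real.pi * y * cosh y * cosh y) / (sinh y)^2) y := by
    have hn : HasDerivAt (fun y => Real.pi * y * cosh y)
        (Real.pi * cosh y + Real.pi * y * sinh y) y := by
      have := ((hasDerivAt_id y).const_mul Real.pi).mul (Real.hasDerivAt_cosh y)
      refine this.congr_deriv ?_; simp only [id_eq]; ring
    exact hn.div (Real.hasDerivAt_sinh y) hs
  have h2 : ((Real.pi * cosh y + Real.pi * y * sinh y) * sinh y
      - Real.pi * y * cosh y * cosh y) / (sinh y)^2 = gfun y := by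
    unfold gfun
    congr 1
    linear_combination (-(Real.pi * y)) * Real.cosh_sq_sub_sinh_sq y
  rw [h2] at h1
  apply h1.congr_of_eventuallyEq
  filter_upwards [isOpen_compl_singleton.mem_nhds (by simpa using hy)] with x hx
  exact if_neg hx

lemma slope_lumpf_bound {y : ℝ} (hy : y ≠ 0) : |(lumpf y - Real.pi) / y| ≤ Real.pi * |y| := by
  have key : ∀ z : ℝ, 0 < z → 0 ≤ (lumpf z - Real.pi) / z ∧ (lumpf z - Real.pi) / z ≤ Real.pi * z := by
    intro z hz
    have hs : 0 < sinh z := Real.sinh_pos_iff.mpr hz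
    have h1 : sinh z ≤ z * cosh z := sinh_le_mul_cosh hz.le
    have h7 : z * cosh z - sinh z ≤ z^2 * sinh z := mul_cosh_sub_sinh_le hz.le
    have hl : lumpf z - Real.pi = Real.pi * (z * cosh z - sinh z) / sinh z := by
      rw [lumpf, if_neg hz.ne']
      field_simp
    rw [hl]
    have hnum : 0 ≤ z * cosh z - sinh z := by linarith
    constructor
    · positivity
    · rw [div_div, div_le_iff₀ (by positivity)]
      nlinarith [Real.pi_pos]
  rcases hy.lt_or_gt with h | h
  · have hk := key (-y) (by linarith)
    have he : (lumpf y - Real.pi) / y = -((lumpf (-y) - Real.pi) / (-y)) := by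
      rw [lumpf_neg, div_neg, neg_neg]
    rw [he, abs_neg, abs_of_nonneg hk.1, abs_of_neg h]
    linarith [hk.2]
  · have hk := key y h
    rw [abs_of_nonneg hk.1, abs_of_pos h]
    exact hk.2

lemma hasDerivAt_lumpf_zero : HasDerivAt lumpf 0 0 := by
  rw [hasDerivAt_iff_tendsto_slope]
  have hb : ∀ᶠ y in nhdsWithin 0 {(0:ℝ)}ᶜ,
      -(Real.pi * |y|) ≤ slope lumpf 0 y ∧ slope lumpf 0 y ≤ Real.pi * |y| := by
    filter_upwards [self_mem_nhdsWithin] with y hy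
    have h := slope_lumpf_bound (y := y) hy
    have hsl : slope lumpf 0 y = (lumpf y - Real.pi) / y := by
      rw [slope_def_field]; simp [lumpf]
    rw [hsl]
    exact abs_le.mp h
  have hlo : Filter.Tendsto (fun y : ℝ => -(Real.pi * |y|)) (nhdsWithin 0 {(0:ℝ)}ᶜ) (nhds 0) := by
    have : Filter.Tendsto (fun y : ℝ => -(Real.pi * |y|)) (nhds 0) (nhds 0) := by
      have : Filter.Tendsto (fun y : ℝ => -(Real.pi * |y|)) (nhds 0) (nhds (-(Real.pi * |(0:ℝ)|))) := (((continuous_const.mul continuous_abs : Continuous fun y : ℝ => Real.pi * |y|)).neg).tendsto 0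
      simpa only [abs_zero, mul_zero, neg_zero] using this
    exact this.mono_left nhdsWithin_le_nhds
  have hhi : Filter.Tendsto (fun y : ℝ => Real.pi * |y|) (nhdsWithin 0 {(0:ℝ)}ᶜ) (nhds 0) := by
    have : Filter.Tendsto (fun y : ℝ => Real.pi * |y|) (nhds 0) (nhds 0) := by
      have : Filter.Tendsto (fun y : ℝ => Real.pi * |y|) (nhds 0) (nhds (Real.pi * |(0:ℝ)|)) := ((continuous_const.mul continuous_abs : Continuous fun y : ℝ => Real.pi * |y|)).tendsto 0
      simpa only [abs_zero, mul_zero] using this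
    exact this.mono_left nhdsWithin_le_nhds
  exact tendsto_of_tendsto_of_tendsto_of_le_of_le' hlo hhi
    (hb.mono fun y h => h.1) (hb.mono fun y h => h.2)

lemma deriv_lumpf : deriv lumpf = gfun := by
  funext y
  by_cases h : y = 0
  · rw [h, hasDerivAt_lumpf_zero.deriv]
    simp [gfun]
  · exact (hasDerivAt_lumpf h).deriv



lemma hasDerivAt_gfun {y : ℝ} (hy : y ≠ 0) :
    HasDerivAt gfun (2 * Real.pi * (y * cosh y - sinh y) / (sinh y)^3) y := by
  have hs := sinh_ne hy
  have hn : HasDerivAt (fun y => Real.pi * (cosh y * sinh y - y))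
      (Real.pi * (sinh y * sinh y + cosh y * cosh y - 1)) y := by
    have base : HasDerivAt (fun y => cosh y * sinh y - y)
        (sinh y * sinh y + cosh y * cosh y - 1) y := by
      exact ((Real.hasDerivAt_cosh y).mul (Real.hasDerivAt_sinh y)).sub (hasDerivAt_id y)
    exact base.const_mul Real.pi
  have hd : HasDerivAt (fun y => (sinh y)^2) (2 * sinh y * cosh y) y := by
    have := (Real.hasDerivAt_sinh y).pow 2
    refine this.congr_deriv ?_; push_cast; ring
  have h := hn.div hd (pow_ne_zero 2 hs)
  have heq : (Real.pi * (sinh y * sinh y + cosh y * cosh y - 1) * (sinh y)^2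
      - Real.pi * (cosh y * sinh y - y) * (2 * sinh y * cosh y)) / ((sinh y)^2)^2
      = 2 * Real.pi * (y * cosh y - sinh y) / (sinh y)^3 := by
    rw [div_eq_div_iff (by positivity) (by positivity)]
    have hc := Real.cosh_sq_sub_sinh_sq y
    linear_combination (-Real.pi * (sinh y)^5) * hc
  rw [heq] at h
  exact h

lemma slope_gfun_bound {y : ℝ} (hy : y ≠ 0) :
    2 * Real.pi / 3 / (cosh y)^2 ≤ gfun y / y ∧ gfun y / y ≤ 2 * Real.pi / 3 * cosh (2*y) := by
  have key : ∀ z : ℝ, 0 < z →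
      2 * Real.pi / 3 / (cosh z)^2 ≤ gfun z / z ∧ gfun z / z ≤ 2 * Real.pi / 3 * cosh (2*z) := by
    intro z hz
    have hs : 0 < sinh z := Real.sinh_pos_iff.mpr hz
    have hc : (0:ℝ) < cosh z := Real.cosh_pos z
    have h2 : sinh (2*z) = 2 * sinh z * cosh z := Real.sinh_two_mul z
    have hA1 : 2 * Real.pi / 3 * z^3 ≤ Real.pi * (cosh z * sinh z - z) := by
      have h5 := cubic_le_sinh (y := 2*z) (by linarith)
      nlinarith [Real.pi_pos]
    have hA2 : Real.pi * (cosh z * sinh z - z) ≤ 2 * Real.pi / 3 * z^3 * cosh (2*z) := by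
      have h6 := sinh_le_cubic (y := 2*z) (by linarith)
      nlinarith [Real.pi_pos]
    have hB1 : z^3 ≤ z * (sinh z)^2 := by
      have h := Real.self_le_sinh_iff.mpr hz.le
      nlinarith [mul_le_mul h h hz.le hs.le]
    have hB2 : z * (sinh z)^2 ≤ z^3 * (cosh z)^2 := by
      have h := sinh_le_mul_cosh hz.le
      nlinarith [mul_le_mul h h hs.le (by positivity : (0:ℝ) ≤ z * cosh z)]
    have hgz : gfun z / z = Real.pi * (cosh z * sinh z - z) / (z * (sinh z)^2) := by
      unfold gfun; rw [div_div]; ring_nf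
    have hBpos : 0 < z * (sinh z)^2 := by positivity
    rw [hgz]
    constructor
    · rw [div_le_div_iff₀ (by positivity) hBpos]
      calc 2 * Real.pi / 3 * (z * sinh z ^ 2) ≤ 2 * Real.pi / 3 * (z^3 * (cosh z)^2) := by
            apply mul_le_mul_of_nonneg_left hB2 (by positivity)
        _ = (2 * Real.pi / 3 * z^3) * (cosh z)^2 := by ring
        _ ≤ Real.pi * (cosh z * sinh z - z) * cosh z ^ 2 :=
            mul_le_mul_of_nonneg_right hA1 (by positivity)
    · rw [div_le_iff₀ hBpos]
      calc Real.pi * (cosh z * sinh z - z) ≤ 2 * Real.pi / 3 * z^3 * cosh (2*z) := hA2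
        _ ≤ 2 * Real.pi / 3 * cosh (2*z) * (z * sinh z ^ 2) := by
            have hcc : (0:ℝ) ≤ 2 * Real.pi / 3 * cosh (2*z) := by
              have := Real.cosh_pos (2*z); positivity
            have := mul_le_mul_of_nonneg_left hB1 hcc
            linarith
  rcases hy.lt_or_gt with h | h
  · have hk := key (-y) (by linarith)
    have he : gfun y / y = gfun (-y) / (-y) := by
      rw [gfun_neg, neg_div_neg_eq]
    rw [he]
    rw [Real.cosh_neg] at hk
    have : cosh (2 * -y) = cosh (2*y) := by rw [← Real.cosh_abs]; rw [← Real.cosh_abs (2*y)]; congr 1; rw [abs_mul, abs_mul, abs_neg]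
    rw [this] at hk
    exact hk
  · exact key y h

lemma hasDerivAt_gfun_zero : HasDerivAt gfun (2 * Real.pi / 3) 0 := by
  rw [hasDerivAt_iff_tendsto_slope]
  have hb : ∀ᶠ y in nhdsWithin 0 {(0:ℝ)}ᶜ,
      2 * Real.pi / 3 / (cosh y)^2 ≤ slope gfun 0 y ∧
        slope gfun 0 y ≤ 2 * Real.pi / 3 * cosh (2*y) := by
    filter_upwards [self_mem_nhdsWithin] with y hy
    have h := slope_gfun_bound (y := y) hy
    have hsl : slope gfun 0 y = gfun y / y := by
      rw [slope_def_field]; simp [gfun]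
    rw [hsl]
    exact h
  have hlo : Filter.Tendsto (fun y : ℝ => 2 * Real.pi / 3 / (cosh y)^2)
      (nhdsWithin 0 {(0:ℝ)}ᶜ) (nhds (2 * Real.pi / 3)) := by
    have hcont : Continuous fun y : ℝ => 2 * Real.pi / 3 / (cosh y)^2 :=
      continuous_const.div (Real.continuous_cosh.pow 2)
        (fun x => by positivity)
    have := hcont.tendsto 0
    simp only [Real.cosh_zero, one_pow, div_one] at this
    exact this.mono_left nhdsWithin_le_nhds
  have hhi : Filter.Tendsto (fun y : ℝ => 2 * Real.pi / 3 * cosh (2*y))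
      (nhdsWithin 0 {(0:ℝ)}ᶜ) (nhds (2 * Real.pi / 3)) := by
    have hcont : Continuous fun y : ℝ => 2 * Real.pi / 3 * cosh (2*y) :=
      continuous_const.mul (Real.continuous_cosh.comp (continuous_const.mul continuous_id))
    have := hcont.tendsto 0
    simp only [mul_zero, Real.cosh_zero, mul_one] at this
    exact this.mono_left nhdsWithin_le_nhds
  exact tendsto_of_tendsto_of_tendsto_of_le_of_le' hlo hhi
    (hb.mono fun y h => h.1) (hb.mono fun y h => h.2)

theorem lumpf_convex_increasing :
    (∀ y : ℝ, 0 < y → 0 < deriv lumpf y) ∧ (∀ y : ℝ, 0 ≤ y → 0 < deriv (deriv lumpf) y) := by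
  constructor
  · intro y hy
    rw [deriv_lumpf]
    have hs : 0 < sinh y := Real.sinh_pos_iff.mpr hy
    have hnum : 0 < cosh y * sinh y - y := by
      have h := Real.self_lt_sinh_iff.mpr (by linarith : 0 < 2*y)
      have h2 := Real.sinh_two_mul y
      nlinarith
    exact div_pos (mul_pos Real.pi_pos hnum) (by positivity)
  · intro y hy
    rw [deriv_lumpf]
    rcases eq_or_lt_of_le hy with h | h
    · rw [← h, hasDerivAt_gfun_zero.deriv]
      positivity
    · rw [(hasDerivAt_gfun h.ne').deriv]
      have hs : 0 < sinh y := Real.sinh_pos_iff.mpr h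
      have hnum : 0 < y * cosh y - sinh y := by linarith [sinh_lt_mul_cosh h]
      exact div_pos (by nlinarith [Real.pi_pos]) (by positivity)
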